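/- arXiv:1101.2951 — 3 statements merged into one kernel-verified Lean document; each statement's English description precedes it below -/
import Mathlib

section
/- For every integer t ≥ 3 and every integer n, the number of triples (x,y,z) ∈ (ℤ/2^tℤ)³ with x² + y² + z² = n equals: 0 if n ≡ 7 (mod 8); 2^{2t} if n ≡ 3 (mod 8); and 3·2^{2t−1} if n ≡ 1 or 2 (mod 4). -/
namespace DyadicAux

variable (t : ℕ)

instance : NeZero (2^t : ℕ) := ⟨pow_ne_zero _ two_ne_zero⟩

lemma dvdNM : (2^t : ℕ) ∣ 2^(t+1) := ⟨2, by ring⟩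

/-- reduction map -/
def pi : ZMod (2^(t+1)) →+* ZMod (2^t) := ZMod.castHom (dvdNM t) (ZMod (2^t))

/-- the element 2^t in ZMod (2^(t+1)) -/
def eta : ZMod (2^(t+1)) := ((2^t : ℕ) : ZMod (2^(t+1)))

lemma pi_natCast (k : ℕ) : pi t (k : ZMod (2^(t+1))) = (k : ZMod (2^t)) := map_natCast _ _

lemma pi_intCast (k : ℤ) : pi t (k : ZMod (2^(t+1))) = (k : ZMod (2^t)) := map_intCast _ _

lemma pi_val (x : ZMod (2^t)) : pi t ((x.val : ℕ) : ZMod (2^(t+1))) = x := by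
  rw [pi_natCast, ZMod.natCast_rightInverse x]

lemma pi_eta : pi t (eta t) = 0 := by
  rw [eta, pi_natCast, ZMod.natCast_self]

lemma eta_val : (eta t).val = 2^t := by
  rw [eta, ZMod.val_cast_of_lt]
  have : (2^t : ℕ) < 2^t * 2 := by have := pow_pos (by norm_num : (0:ℕ) < 2) t; omega
  calc (2^t : ℕ) < 2^t * 2 := this
    _ = 2^(t+1) := by ring

lemma eta_ne_zero : eta t ≠ 0 := by
  intro h
  have : (eta t).val = 0 := by rw [h, ZMod.val_zero]
  rw [eta_val] at this
  exact (pow_ne_zero t two_ne_zero) this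

lemma eta_add_eta : eta t + eta t = 0 := by
  rw [eta, ← Nat.cast_add]
  have : (2^t + 2^t : ℕ) = 2^(t+1) := by ring
  rw [this, ZMod.natCast_self]

lemma pi_eq_zero_iff (x : ZMod (2^(t+1))) : pi t x = 0 ↔ x = 0 ∨ x = eta t := by
  constructor
  · intro h
    have h1 : ((x.val : ℕ) : ZMod (2^t)) = 0 := by
      rw [ZMod.natCast_val, ← ZMod.castHom_apply (h := dvdNM t)]
      exact h
    have h2 : (2^t : ℕ) ∣ x.val := by
      rwa [ZMod.natCast_eq_zero_iff] at h1
    obtain ⟨k, hk⟩ := h2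
    have hlt : x.val < 2^(t+1) := ZMod.val_lt x
    have hk2 : k < 2 := by
      by_contra hcon
      push_neg at hcon
      have h3 : 2^t * 2 ≤ 2^t * k := Nat.mul_le_mul_left _ hcon
      rw [← pow_succ] at h3
      omega
    have hx : x = ((x.val : ℕ) : ZMod (2^(t+1))) := (ZMod.natCast_rightInverse x).symm
    interval_cases k
    · left; rw [hx, hk]; simp
    · right; rw [hx, hk, eta]; simp
  · rintro (rfl | rfl)
    · simp
    · exact pi_eta t

lemma pi_eq_iff (x y : ZMod (2^(t+1))) : pi t x = pi t y ↔ x = y ∨ x = y + eta t := by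
  have := pi_eq_zero_iff t (x - y)
  rw [map_sub, sub_eq_zero, sub_eq_zero] at this
  constructor
  · intro h
    rcases this.1 h with h' | h'
    · exact Or.inl h'
    · right; rw [← h']; ring
  · rintro (rfl | rfl)
    · rfl
    · rw [map_add, pi_eta, add_zero]

lemma eta_sq (ht : 1 ≤ t) : eta t * eta t = 0 := by
  rw [eta, ← Nat.cast_mul, ← pow_add]
  have h : (2^(t+t) : ℕ) = 2^(t+1) * 2^(t-1) := by rw [← pow_add]; congr 1; omega
  rw [h, Nat.cast_mul, ZMod.natCast_self, zero_mul]

lemma sq_eq_of_pi_eq (ht : 1 ≤ t) (a b : ZMod (2^(t+1))) (h : pi t a = pi t b) :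
    a^2 = b^2 := by
  rcases (pi_eq_iff t a b).1 h with rfl | rfl
  · rfl
  · have h2 : (2 : ZMod (2^(t+1))) * eta t = 0 := by rw [two_mul, eta_add_eta]
    have expand : (b + eta t)^2 = b^2 + (2 * eta t) * b + eta t * eta t := by ring
    rw [expand, h2, eta_sq t ht, zero_mul, add_zero, add_zero]

/-- the element 2^(t-1) in ZMod (2^t) -/
def del : ZMod (2^t) := ((2^(t-1) : ℕ) : ZMod (2^t))

/-- the element 2^(t-1) in ZMod (2^(t+1)) -/
def delM : ZMod (2^(t+1)) := ((2^(t-1) : ℕ) : ZMod (2^(t+1)))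

lemma pi_delM : pi t (delM t) = del t := by rw [delM, pi_natCast, del]

lemma del_add_del (ht : 1 ≤ t) : del t + del t = 0 := by
  rw [del, ← Nat.cast_add]
  have h : (2^(t-1) + 2^(t-1) : ℕ) = 2^t := by
    have h2 : (2^(t-1) + 2^(t-1) : ℕ) = 2^(t-1) * 2 := by ring
    rw [h2, ← pow_succ]; congr 1; omega
  rw [h, ZMod.natCast_self]

lemma del_val (ht : 1 ≤ t) : (del t).val = 2^(t-1) := by
  rw [del, ZMod.val_cast_of_lt]
  exact Nat.pow_lt_pow_right (by norm_num) (by omega)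

lemma sq_add_del (ht : 2 ≤ t) (x : ZMod (2^t)) : (x + del t)^2 = x^2 := by
  have h2 : (2 : ZMod (2^t)) * del t = 0 := by
    rw [two_mul, del_add_del t (by omega)]
  have hdd : del t * del t = 0 := by
    rw [del, ← Nat.cast_mul, ← pow_add]
    have h : (2^(t-1+(t-1)) : ℕ) = 2^t * 2^(t-2) := by rw [← pow_add]; congr 1; omega
    rw [h, Nat.cast_mul, ZMod.natCast_self, zero_mul]
  have expand : (x + del t)^2 = x^2 + (2 * del t) * x + del t * del t := by ring
  rw [expand, h2, hdd, zero_mul, add_zero, add_zero]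

lemma parity_add_del (ht : 2 ≤ t) (x : ZMod (2^t)) :
    (x + del t).val % 2 = x.val % 2 := by
  rw [ZMod.val_add, del_val t (by omega)]
  have h1 : (2 : ℕ) ∣ 2^t := dvd_pow_self 2 (by omega)
  have h2 : (2 : ℕ) ∣ 2^(t-1) := dvd_pow_self 2 (by omega)
  rw [Nat.mod_mod_of_dvd _ h1]
  omega

lemma lift_sq_add_del (ht : 3 ≤ t) (x : ZMod (2^t)) (hodd : x.val % 2 = 1) :
    (((x + del t).val : ℕ) : ZMod (2^(t+1)))^2
      = (((x.val : ℕ) : ZMod (2^(t+1))))^2 + eta t := by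
  have hpi : pi t (((x + del t).val : ℕ) : ZMod (2^(t+1)))
      = pi t (((x.val : ℕ) : ZMod (2^(t+1))) + delM t) := by
    rw [pi_val, map_add, pi_val, pi_delM]
  have h1 := sq_eq_of_pi_eq t (by omega) _ _ hpi
  rw [h1]
  have h2 : (2 : ZMod (2^(t+1))) * delM t = eta t := by
    have hc : (2 : ZMod (2^(t+1))) * ((2^(t-1) : ℕ) : ZMod (2^(t+1)))
        = ((2 * 2^(t-1) : ℕ) : ZMod (2^(t+1))) := by push_cast; ring
    have hn : (2 * 2^(t-1) : ℕ) = 2^t := by rw [← pow_succ']; congr 1; omega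
    rw [delM, hc, hn, eta]
  have hdd : delM t * delM t = 0 := by
    rw [delM, ← Nat.cast_mul, ← pow_add]
    have h : (2^(t-1+(t-1)) : ℕ) = 2^(t+1) * 2^(t-3) := by rw [← pow_add]; congr 1; omega
    rw [h, Nat.cast_mul, ZMod.natCast_self, zero_mul]
  have heo : eta t * ((x.val : ℕ) : ZMod (2^(t+1))) = eta t := by
    rw [eta, ← Nat.cast_mul]
    obtain ⟨k, hk⟩ : ∃ k, x.val = 2*k + 1 := ⟨x.val / 2, by omega⟩
    rw [hk]
    have h : (2^t * (2*k+1) : ℕ) = 2^(t+1) * k + 2^t := by ring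
    rw [h, Nat.cast_add, Nat.cast_mul, ZMod.natCast_self, zero_mul, zero_add]
  have expand : (((x.val : ℕ) : ZMod (2^(t+1))) + delM t)^2
      = (((x.val : ℕ) : ZMod (2^(t+1))))^2
        + (2 * delM t) * ((x.val : ℕ) : ZMod (2^(t+1))) + delM t * delM t := by ring
  rw [expand, h2, hdd, add_zero, heo]

open Finset in
lemma fiber_card (c : ZMod (2^t)) :
    (Finset.univ.filter fun x : ZMod (2^(t+1)) => pi t x = c).card = 2 := by
  have hset : Finset.univ.filter (fun x : ZMod (2^(t+1)) => pi t x = c)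
      = {((c.val : ℕ) : ZMod (2^(t+1))), ((c.val : ℕ) : ZMod (2^(t+1))) + eta t} := by
    ext x
    simp only [Finset.mem_filter, Finset.mem_univ, true_and, Finset.mem_insert,
      Finset.mem_singleton]
    have h := pi_eq_iff t x (((c.val : ℕ) : ZMod (2^(t+1))))
    rw [pi_val] at h
    exact h
  rw [hset, Finset.card_insert_of_notMem, Finset.card_singleton]
  simp only [Finset.mem_singleton]
  intro h
  exact eta_ne_zero t (left_eq_add.mp h)

/-- componentwise reduction on triples -/
def piv (a : ZMod (2^(t+1)) × ZMod (2^(t+1)) × ZMod (2^(t+1))) :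
    ZMod (2^t) × ZMod (2^t) × ZMod (2^t) := (pi t a.1, pi t a.2.1, pi t a.2.2)

lemma fiber3_card (w : ZMod (2^t) × ZMod (2^t) × ZMod (2^t)) :
    (Finset.univ.filter fun a : ZMod (2^(t+1)) × ZMod (2^(t+1)) × ZMod (2^(t+1)) =>
      piv t a = w).card = 8 := by
  classical
  have h1 : (Finset.univ.filter fun a : ZMod (2^(t+1)) × ZMod (2^(t+1)) × ZMod (2^(t+1)) =>
        piv t a = w)
      = (Finset.univ.filter fun x : ZMod (2^(t+1)) => pi t x = w.1) ×ˢ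
          ((Finset.univ.filter fun y : ZMod (2^(t+1)) => pi t y = w.2.1) ×ˢ
            (Finset.univ.filter fun z : ZMod (2^(t+1)) => pi t z = w.2.2)) := by
    ext a
    simp [piv, Prod.ext_iff, Finset.mem_product]
  rw [h1, Finset.card_product, Finset.card_product, fiber_card, fiber_card, fiber_card]

/-- the canonical lift of the sum of squares -/
def Qt (w : ZMod (2^t) × ZMod (2^t) × ZMod (2^t)) : ZMod (2^(t+1)) :=
  ((w.1.val : ℕ) : ZMod (2^(t+1)))^2 + ((w.2.1.val : ℕ) : ZMod (2^(t+1)))^2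
    + ((w.2.2.val : ℕ) : ZMod (2^(t+1)))^2

lemma pi_Qt (w : ZMod (2^t) × ZMod (2^t) × ZMod (2^t)) :
    pi t (Qt t w) = w.1^2 + w.2.1^2 + w.2.2^2 := by
  simp only [Qt, map_add, map_pow, pi_val]

lemma Qt_piv (ht : 1 ≤ t) (a : ZMod (2^(t+1)) × ZMod (2^(t+1)) × ZMod (2^(t+1))) :
    Qt t (piv t a) = a.1^2 + a.2.1^2 + a.2.2^2 := by
  have c1 : (((pi t a.1).val : ℕ) : ZMod (2^(t+1)))^2 = a.1^2 :=
    sq_eq_of_pi_eq t ht _ _ (by rw [pi_val])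
  have c2 : (((pi t a.2.1).val : ℕ) : ZMod (2^(t+1)))^2 = a.2.1^2 :=
    sq_eq_of_pi_eq t ht _ _ (by rw [pi_val])
  have c3 : (((pi t a.2.2).val : ℕ) : ZMod (2^(t+1)))^2 = a.2.2^2 :=
    sq_eq_of_pi_eq t ht _ _ (by rw [pi_val])
  rw [Qt]
  exact congrArg₂ (· + ·) (congrArg₂ (· + ·) c1 c2) c3

/-- the pairing involution -/
def iota (w : ZMod (2^t) × ZMod (2^t) × ZMod (2^t)) : ZMod (2^t) × ZMod (2^t) × ZMod (2^t) :=
  if w.1.val % 2 = 1 then (w.1 + del t, w.2.1, w.2.2)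
  else if w.2.1.val % 2 = 1 then (w.1, w.2.1 + del t, w.2.2)
  else (w.1, w.2.1, w.2.2 + del t)

lemma iota_iota (ht : 2 ≤ t) (w : ZMod (2^t) × ZMod (2^t) × ZMod (2^t)) :
    iota t (iota t w) = w := by
  have hdd := del_add_del t (by omega)
  by_cases h1 : w.1.val % 2 = 1
  · have h1' : (w.1 + del t).val % 2 = 1 := by rw [parity_add_del t ht]; exact h1
    simp only [iota, h1, if_pos, h1', if_true]
    rw [add_assoc, hdd, add_zero]
  · by_cases h2 : w.2.1.val % 2 = 1
    · have h2' : (w.2.1 + del t).val % 2 = 1 := by rw [parity_add_del t ht]; exact h2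
      simp only [iota, h1, h2, if_neg, if_false, if_pos, h2', if_true]
      rw [add_assoc, hdd, add_zero]
    · simp only [iota, h1, h2, if_neg, if_false]
      rw [add_assoc, hdd, add_zero]

lemma Q_iota (ht : 2 ≤ t) (w : ZMod (2^t) × ZMod (2^t) × ZMod (2^t)) :
    (iota t w).1^2 + (iota t w).2.1^2 + (iota t w).2.2^2 = w.1^2 + w.2.1^2 + w.2.2^2 := by
  unfold iota
  split_ifs <;> simp only <;> rw [sq_add_del t ht]

lemma Qt_iota (ht : 3 ≤ t) (w : ZMod (2^t) × ZMod (2^t) × ZMod (2^t))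
    (hodd : w.1.val % 2 = 1 ∨ w.2.1.val % 2 = 1 ∨ w.2.2.val % 2 = 1) :
    Qt t (iota t w) = Qt t w + eta t := by
  unfold iota
  split_ifs with h1 h2
  · show Qt t (w.1 + del t, w.2.1, w.2.2) = _
    unfold Qt
    simp only
    rw [lift_sq_add_del t ht _ h1]; ring
  · show Qt t (w.1, w.2.1 + del t, w.2.2) = _
    unfold Qt
    simp only
    rw [lift_sq_add_del t ht _ h2]; ring
  · have h3 : w.2.2.val % 2 = 1 := by tauto
    show Qt t (w.1, w.2.1, w.2.2 + del t) = _
    unfold Qt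
    simp only
    rw [lift_sq_add_del t ht _ h3]; ring

lemma exists_odd (ht : 2 ≤ t) (n : ℤ) (h4 : n % 4 ≠ 0)
    (w : ZMod (2^t) × ZMod (2^t) × ZMod (2^t))
    (hw : w.1^2 + w.2.1^2 + w.2.2^2 = (n : ZMod (2^t))) :
    w.1.val % 2 = 1 ∨ w.2.1.val % 2 = 1 ∨ w.2.2.val % 2 = 1 := by
  by_contra hc
  push_neg at hc
  obtain ⟨hc1, hc2, hc3⟩ := hc
  have hdvd : (4 : ℕ) ∣ 2^t := by
    have : (4 : ℕ) = 2^2 := by norm_num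
    rw [this]; exact pow_dvd_pow 2 ht
  let rho : ZMod (2^t) →+* ZMod 4 := ZMod.castHom hdvd (ZMod 4)
  have key : ∀ x : ZMod (2^t), x.val % 2 ≠ 1 → (rho x)^2 = 0 := by
    intro x hx
    have hrho : rho x = ((x.val : ℕ) : ZMod 4) := by
      rw [ZMod.natCast_val, ZMod.castHom_apply]
    obtain ⟨k, hk⟩ : ∃ k, x.val = 2 * k := ⟨x.val / 2, by omega⟩
    rw [hrho, hk]
    have : ((2 * k : ℕ) : ZMod 4)^2 = ((4 * k^2 : ℕ) : ZMod 4) := by push_cast; ring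
    rw [this]
    have h4' : ((4 * k^2 : ℕ) : ZMod 4) = ((4:ℕ) : ZMod 4) * ((k^2 : ℕ) : ZMod 4) := by push_cast; ring
    rw [h4', ZMod.natCast_self, zero_mul]
  have happ := congrArg rho hw
  rw [map_add, map_add, map_pow, map_pow, map_pow, map_intCast] at happ
  rw [key _ (by omega), key _ (by omega), key _ (by omega)] at happ
  simp only [add_zero, zero_add] at happ
  have : ((4:ℕ) : ℤ) ∣ n := (ZMod.intCast_zmod_eq_zero_iff_dvd n 4).1 happ.symm
  omega

end DyadicAux

/-- The number of solutions `(x,y,z)` in `ℤ/2^tℤ` of `x² + y² + z² = n`. -/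
noncomputable def cntS (t : ℕ) (n : ℤ) : ℕ :=
  Nat.card {v : ZMod (2 ^ t) × ZMod (2 ^ t) × ZMod (2 ^ t) |
    v.1 ^ 2 + v.2.1 ^ 2 + v.2.2 ^ 2 = (n : ZMod (2 ^ t))}

namespace DyadicAux

lemma cntS_eq_card (t : ℕ) (n : ℤ) :
    cntS t n = (Finset.univ.filter fun v : ZMod (2^t) × ZMod (2^t) × ZMod (2^t) =>
      v.1 ^ 2 + v.2.1 ^ 2 + v.2.2 ^ 2 = (n : ZMod (2^t))).card := by
  rw [cntS, Nat.card_coe_set_eq, Set.ncard_eq_toFinset_card', Set.toFinset_setOf]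

lemma step (t : ℕ) (ht : 3 ≤ t) (n : ℤ) (h4 : n % 4 ≠ 0) :
    cntS (t+1) n = 4 * cntS t n := by
  classical
  rw [cntS_eq_card, cntS_eq_card]
  set A := Finset.univ.filter (fun v : ZMod (2^(t+1)) × ZMod (2^(t+1)) × ZMod (2^(t+1)) =>
    v.1^2 + v.2.1^2 + v.2.2^2 = (n : ZMod (2^(t+1)))) with hA
  set B := Finset.univ.filter (fun w : ZMod (2^t) × ZMod (2^t) × ZMod (2^t) =>
    w.1^2 + w.2.1^2 + w.2.2^2 = (n : ZMod (2^t))) with hB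
  set B' := Finset.univ.filter (fun w : ZMod (2^t) × ZMod (2^t) × ZMod (2^t) =>
    Qt t w = (n : ZMod (2^(t+1)))) with hB'
  set B'' := Finset.univ.filter (fun w : ZMod (2^t) × ZMod (2^t) × ZMod (2^t) =>
    Qt t w = (n : ZMod (2^(t+1))) + eta t) with hB''
  -- members of B have an odd coordinate
  have hBodd : ∀ w ∈ B, w.1.val % 2 = 1 ∨ w.2.1.val % 2 = 1 ∨ w.2.2.val % 2 = 1 := by
    intro w hw
    rw [hB, Finset.mem_filter] at hw
    exact exists_odd t (by omega) n h4 w hw.2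
  -- B' and B'' are subsets of B
  have hB'B : ∀ w ∈ B', w ∈ B := by
    intro w hw
    rw [hB', Finset.mem_filter] at hw
    rw [hB, Finset.mem_filter]
    refine ⟨Finset.mem_univ _, ?_⟩
    rw [← pi_Qt, hw.2, pi_intCast]
  have hB''B : ∀ w ∈ B'', w ∈ B := by
    intro w hw
    rw [hB'', Finset.mem_filter] at hw
    rw [hB, Finset.mem_filter]
    refine ⟨Finset.mem_univ _, ?_⟩
    rw [← pi_Qt, hw.2, map_add, pi_eta, add_zero, pi_intCast]
  -- Step 1 : A.card = 8 * B'.card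
  have step1 : A.card = 8 * B'.card := by
    have hmap : ∀ a ∈ A, piv t a ∈ B' := by
      intro a ha
      rw [hA, Finset.mem_filter] at ha
      rw [hB', Finset.mem_filter]
      exact ⟨Finset.mem_univ _, by rw [Qt_piv t (by omega), ha.2]⟩
    rw [Finset.card_eq_sum_card_fiberwise hmap]
    have hfib : ∀ w ∈ B', (A.filter fun a => piv t a = w).card = 8 := by
      intro w hw
      rw [hB', Finset.mem_filter] at hw
      have heq : A.filter (fun a => piv t a = w)
          = Finset.univ.filter (fun a => piv t a = w) := by
        ext a
        simp only [Finset.mem_filter, Finset.mem_univ, true_and, hA]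
        constructor
        · rintro ⟨_, h⟩; exact h
        · intro h
          refine ⟨?_, h⟩
          rw [← Qt_piv t (by omega) a, h, hw.2]
      rw [heq, fiber3_card]
    rw [Finset.sum_congr rfl hfib, Finset.sum_const, smul_eq_mul, mul_comm]
  -- Step 2 : B.card = B'.card + B''.card
  have step2 : B.card = B'.card + B''.card := by
    have := Finset.card_filter_add_card_filter_not
      (s := B) (p := fun w => Qt t w = (n : ZMod (2^(t+1))))
    have e1 : B.filter (fun w => Qt t w = (n : ZMod (2^(t+1)))) = B' := by
      ext w
      simp only [Finset.mem_filter, hB', Finset.mem_univ, true_and]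
      constructor
      · rintro ⟨_, h⟩; exact h
      · intro h
        refine ⟨hB'B w ?_, h⟩
        rw [hB', Finset.mem_filter]
        exact ⟨Finset.mem_univ _, h⟩
    have e2 : B.filter (fun w => ¬ Qt t w = (n : ZMod (2^(t+1)))) = B'' := by
      ext w
      simp only [Finset.mem_filter, hB'', Finset.mem_univ, true_and]
      constructor
      · rintro ⟨hwB, h⟩
        have hpi : pi t (Qt t w) = pi t ((n : ZMod (2^(t+1)))) := by
          rw [pi_Qt, pi_intCast]
          rw [hB, Finset.mem_filter] at hwB
          exact hwB.2
        rcases (pi_eq_iff t _ _).1 hpi with h' | h'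
        · exact absurd h' h
        · exact h'
      · intro h
        refine ⟨hB''B w ?_, ?_⟩
        · rw [hB'', Finset.mem_filter]; exact ⟨Finset.mem_univ _, h⟩
        · rw [h]
          intro hcon
          exact eta_ne_zero t (left_eq_add.mp hcon.symm)
    rw [e1, e2] at this
    omega
  -- Step 3 : B''.card = B'.card
  have step3 : B''.card = B'.card := by
    apply Finset.card_bij' (fun w _ => iota t w) (fun w _ => iota t w)
    · intro w hw
      have hodd := hBodd w (hB''B w hw)
      rw [hB'', Finset.mem_filter] at hw
      rw [hB', Finset.mem_filter]
      refine ⟨Finset.mem_univ _, ?_⟩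
      rw [Qt_iota t ht w hodd, hw.2, add_assoc, eta_add_eta, add_zero]
    · intro w hw
      have hodd := hBodd w (hB'B w hw)
      rw [hB', Finset.mem_filter] at hw
      rw [hB'', Finset.mem_filter]
      exact ⟨Finset.mem_univ _, by rw [Qt_iota t ht w hodd, hw.2]⟩
    · intro w _
      exact iota_iota t (by omega) w
    · intro w _
      exact iota_iota t (by omega) w
  omega

end DyadicAux


namespace DyadicAux

lemma cast_of_emod (n c : ℤ) (h : n % 8 = c) : ((n:ℤ) : ZMod (2^3)) = ((c:ℤ) : ZMod (2^3)) := by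
  have hdvd : ((2^3 : ℕ) : ℤ) ∣ n - c := by
    push_cast
    omega
  have h0 : ((n - c : ℤ) : ZMod (2^3)) = 0 := (ZMod.intCast_zmod_eq_zero_iff_dvd _ _).2 hdvd
  rw [Int.cast_sub, sub_eq_zero] at h0
  exact h0

set_option maxRecDepth 40000 in
lemma base (n : ℤ) :
    (n % 8 = 7 → cntS 3 n = 0) ∧
    (n % 8 = 3 → cntS 3 n = 64) ∧
    ((n % 8 = 1 ∨ n % 8 = 5 ∨ n % 8 = 2 ∨ n % 8 = 6) → cntS 3 n = 96) := by
  refine ⟨fun h => ?_, fun h => ?_, fun h => ?_⟩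
  · rw [cntS_eq_card, cast_of_emod n 7 h]
    decide
  · rw [cntS_eq_card, cast_of_emod n 3 h]
    decide
  · rcases h with h | h | h | h <;> rw [cntS_eq_card]
    · rw [cast_of_emod n 1 h]; decide
    · rw [cast_of_emod n 5 h]; decide
    · rw [cast_of_emod n 2 h]; decide
    · rw [cast_of_emod n 6 h]; decide

lemma cnt_pow (t : ℕ) (ht : 3 ≤ t) (n : ℤ) (h4 : n % 4 ≠ 0) :
    cntS t n = 4^(t-3) * cntS 3 n := by
  induction t with
  | zero => omega
  | succ k ih =>
    rcases Nat.lt_or_ge k 3 with hk | hk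
    · have hk3 : k = 2 := by omega
      subst hk3
      norm_num
    · rw [step k hk n h4, ih hk]
      rw [show k + 1 - 3 = (k - 3) + 1 from by omega, pow_succ]
      ring

end DyadicAux

theorem dyadic_count_three_squares (t : ℕ) (ht : 3 ≤ t) (n : ℤ) :
    (n % 8 = 7 → cntS t n = 0) ∧
    (n % 8 = 3 → (cntS t n : ℤ) = 2 ^ (2 * t)) ∧
    (n % 4 = 1 ∨ n % 4 = 2 → (cntS t n : ℤ) = 3 * 2 ^ (2 * t - 1)) := by
  obtain ⟨b7, b3, b12⟩ := DyadicAux.base n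
  have hmod : n % 8 = (n % 8) := rfl
  refine ⟨fun h => ?_, fun h => ?_, fun h => ?_⟩
  · have h4 : n % 4 ≠ 0 := by omega
    rw [DyadicAux.cnt_pow t ht n h4, b7 h, mul_zero]
  · have h4 : n % 4 ≠ 0 := by omega
    rw [DyadicAux.cnt_pow t ht n h4, b3 h]
    push_cast
    have : ((4:ℤ))^(t-3) * 64 = 2^(2*(t-3)) * 2^6 := by
      rw [show ((4:ℤ)) = 2^2 from by norm_num, ← pow_mul]
      norm_num
    rw [this, ← pow_add]
    congr 1
    omega
  · have h4 : n % 4 ≠ 0 := by omega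
    have h8 : n % 8 = 1 ∨ n % 8 = 5 ∨ n % 8 = 2 ∨ n % 8 = 6 := by omega
    rw [DyadicAux.cnt_pow t ht n h4, b12 h8]
    push_cast
    have : ((4:ℤ))^(t-3) * 96 = 3 * (2^(2*(t-3)) * 2^5) := by
      rw [show ((4:ℤ)) = 2^2 from by norm_num, ← pow_mul]
      norm_num; ring
    rw [this]
    congr 1
    rw [← pow_add]
    congr 1
    omega
end

section
/- For every integer t ≥ 2 and every integer n, the number of triples (x,y,z) ∈ (ℤ/2^tℤ)³ with x² + y² + z² = 4n equals 8 times the number of triples (x,y,z) ∈ (ℤ/2^{t−2}ℤ)³ with x² + y² + z² = n. -/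
namespace DyadicSqAux

instance instNZ (s : ℕ) : NeZero ((2:ℕ)^s) := ⟨(Nat.two_pow_pos s).ne'⟩

/-- The lifting map: from `(e, w) ∈ ZMod 2 × ZMod 2^s` to `2*(w + 2^s e) ∈ ZMod 2^(s+2)`. -/
def g (s : ℕ) (e : ZMod 2) (w : ZMod (2^s)) : ZMod (2^(s+2)) :=
  ((2 * (w.val + 2^s * e.val) : ℕ) : ZMod (2^(s+2)))

lemma arg_lt (s : ℕ) (e : ZMod 2) (w : ZMod (2^s)) :
    2 * (w.val + 2^s * e.val) < 2^(s+2) := by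
  have hw : w.val < 2^s := w.val_lt
  have he : e.val < 2 := e.val_lt
  have h : (2:ℕ)^(s+2) = 4 * 2^s := by ring
  have hde : 2^s * e.val ≤ 2^s := by
    have := Nat.mul_le_mul_left (2^s) (Nat.lt_succ_iff.mp he)
    simpa using this
  omega

lemma g_inj {s : ℕ} {e e' : ZMod 2} {w w' : ZMod (2^s)}
    (h : g s e w = g s e' w') : e = e' ∧ w = w' := by
  have h1 := arg_lt s e w
  have h2 := arg_lt s e' w'
  have hval : 2 * (w.val + 2^s * e.val) = 2 * (w'.val + 2^s * e'.val) := by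
    have := congrArg ZMod.val h
    rwa [g, g, ZMod.val_cast_of_lt h1, ZMod.val_cast_of_lt h2] at this
  have hw : w.val < 2^s := w.val_lt
  have hw' : w'.val < 2^s := w'.val_lt
  have he : e.val < 2 := e.val_lt
  have he' : e'.val < 2 := e'.val_lt
  have hP : 0 < (2:ℕ)^s := Nat.two_pow_pos s
  have hkey : e.val = e'.val ∧ w.val = w'.val := by
    rcases (by omega : e.val = 0 ∨ e.val = 1) with h0 | h0 <;>
      rcases (by omega : e'.val = 0 ∨ e'.val = 1) with h0' | h0' <;>
      rw [h0, h0'] at hval <;> simp at hval <;> omega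
  exact ⟨ZMod.val_injective _ hkey.1, ZMod.val_injective _ hkey.2⟩

lemma g_sq (s : ℕ) (e : ZMod 2) (w : ZMod (2^s)) :
    (g s e w)^2 = ((4 * w.val^2 : ℕ) : ZMod (2^(s+2))) := by
  unfold g
  have hnat : (2 * (w.val + 2^s * e.val))^2
      = 4 * w.val^2 + 2^(s+2) * (2 * w.val * e.val + 2^s * e.val^2) := by ring
  rw [← Nat.cast_pow, hnat]
  simp [Nat.cast_add, Nat.cast_mul, ZMod.natCast_self]

lemma mem_iff (s : ℕ) (n : ℤ) (a b c : ZMod (2^s)) :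
    a^2 + b^2 + c^2 = ((n : ℤ) : ZMod (2^s)) ↔
    ((4*a.val^2 : ℕ) : ZMod (2^(s+2))) + ((4*b.val^2 : ℕ) : ZMod (2^(s+2)))
      + ((4*c.val^2 : ℕ) : ZMod (2^(s+2))) = ((4*n : ℤ) : ZMod (2^(s+2))) := by
  have ha : ((a.val : ℕ) : ZMod (2^s)) = a := ZMod.natCast_rightInverse a
  have hb : ((b.val : ℕ) : ZMod (2^s)) = b := ZMod.natCast_rightInverse b
  have hc : ((c.val : ℕ) : ZMod (2^s)) = c := ZMod.natCast_rightInverse c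
  have e1 : a^2 + b^2 + c^2
      = ((((a.val:ℤ)^2 + (b.val:ℤ)^2 + (c.val:ℤ)^2 : ℤ)) : ZMod (2^s)) := by
    push_cast
    rw [ha, hb, hc]
  have e2 : ((4*a.val^2 : ℕ) : ZMod (2^(s+2))) + ((4*b.val^2 : ℕ) : ZMod (2^(s+2)))
      + ((4*c.val^2 : ℕ) : ZMod (2^(s+2)))
      = (((4*((a.val:ℤ)^2 + (b.val:ℤ)^2 + (c.val:ℤ)^2) : ℤ)) : ZMod (2^(s+2))) := by
    push_cast
    ring
  rw [e1, e2, ZMod.intCast_eq_intCast_iff, ZMod.intCast_eq_intCast_iff,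
    Int.modEq_iff_dvd, Int.modEq_iff_dvd]
  have h2 : ((2^(s+2) : ℕ) : ℤ) = 4 * ((2^s : ℕ) : ℤ) := by push_cast; ring
  rw [h2, show (4*n - 4*((a.val:ℤ)^2 + (b.val:ℤ)^2 + (c.val:ℤ)^2) : ℤ)
      = 4*(n - ((a.val:ℤ)^2 + (b.val:ℤ)^2 + (c.val:ℤ)^2)) by ring,
    mul_dvd_mul_iff_left (by norm_num : (4:ℤ) ≠ 0)]

lemma even_of_sum_sq (s : ℕ) (n : ℤ) (x y z : ZMod (2^(s+2)))
    (h : x^2 + y^2 + z^2 = ((4*n : ℤ) : ZMod (2^(s+2)))) :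
    x.val % 2 = 0 ∧ y.val % 2 = 0 ∧ z.val % 2 = 0 := by
  have hdvd : (4:ℕ) ∣ 2^(s+2) := ⟨2^s, by ring⟩
  let φ := ZMod.castHom hdvd (ZMod 4)
  have h4 : (φ x)^2 + (φ y)^2 + (φ z)^2 = 0 := by
    have h' := congrArg φ h
    rw [map_add, map_add, map_pow, map_pow, map_pow, map_intCast] at h'
    rw [h', show ((4*n : ℤ) : ZMod 4) = 0 by push_cast; rw [show (4 : ZMod 4) = 0 from by decide]; ring]
  have key : ∀ a b c : ZMod 4, a^2+b^2+c^2 = 0 →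
      a.val % 2 = 0 ∧ b.val % 2 = 0 ∧ c.val % 2 = 0 := by decide
  have hφval : ∀ u : ZMod (2^(s+2)), (φ u).val = u.val % 4 := by
    intro u
    have : φ u = ((u.val : ℕ) : ZMod 4) := by
      conv_lhs => rw [← ZMod.natCast_rightInverse u]
      rw [map_natCast]
    rw [this, ZMod.val_natCast]
  obtain ⟨hx, hy, hz⟩ := key _ _ _ h4
  rw [hφval] at hx hy hz
  omega

lemma g_surj_aux (s : ℕ) (x : ZMod (2^(s+2))) (hx : x.val % 2 = 0) :
    g s ((x.val / 2 / 2^s : ℕ) : ZMod 2) ((x.val / 2 : ℕ) : ZMod (2^s)) = x := by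
  set m := x.val / 2 with hm
  have hxval : x.val < 2^(s+2) := x.val_lt
  have hpow : (2:ℕ)^(s+2) = 2*(2*2^s) := by ring
  have hmlt : m < 2 * 2^s := by omega
  have hP : 0 < (2:ℕ)^s := Nat.two_pow_pos s
  unfold g
  have hval1 : ((m : ZMod (2^s))).val = m % 2^s := ZMod.val_natCast _ m
  have hdivlt : m / 2^s < 2 := by
    rw [Nat.div_lt_iff_lt_mul hP]
    omega
  have hval2 : ((m / 2^s : ℕ) : ZMod 2).val = m / 2^s := by
    rw [ZMod.val_natCast]
    exact Nat.mod_eq_of_lt hdivlt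
  rw [hval1, hval2]
  have hkey : 2 * (m % 2^s + 2^s * (m / 2^s)) = x.val := by
    have h1 := Nat.mod_add_div m (2^s)
    omega
  rw [hkey]
  exact ZMod.natCast_rightInverse x

lemma card_eq (s : ℕ) (n : ℤ) :
    Nat.card {v : ZMod (2^(s+2)) × ZMod (2^(s+2)) × ZMod (2^(s+2)) |
      v.1^2 + v.2.1^2 + v.2.2^2 = ((4*n : ℤ) : ZMod (2^(s+2)))}
    = 8 * Nat.card {v : ZMod (2^s) × ZMod (2^s) × ZMod (2^s) |
      v.1^2 + v.2.1^2 + v.2.2^2 = ((n : ℤ) : ZMod (2^s))} := by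
  classical
  let S := {v : ZMod (2^s) × ZMod (2^s) × ZMod (2^s) |
      v.1^2 + v.2.1^2 + v.2.2^2 = ((n : ℤ) : ZMod (2^s))}
  let T := {v : ZMod (2^(s+2)) × ZMod (2^(s+2)) × ZMod (2^(s+2)) |
      v.1^2 + v.2.1^2 + v.2.2^2 = ((4*n : ℤ) : ZMod (2^(s+2)))}
  let F : (ZMod 2 × ZMod 2 × ZMod 2) × S → T := fun p =>
    ⟨(g s p.1.1 p.2.1.1, g s p.1.2.1 p.2.1.2.1, g s p.1.2.2 p.2.1.2.2), by
      have hm : p.2.1.1^2 + p.2.1.2.1^2 + p.2.1.2.2^2 = ((n : ℤ) : ZMod (2^s)) := p.2.2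
      simp only [Set.mem_setOf_eq, T]
      rw [g_sq, g_sq, g_sq]
      exact (mem_iff s n _ _ _).mp hm⟩
  have hbij : Function.Bijective F := by
    constructor
    · rintro ⟨⟨e1, e2, e3⟩, ⟨⟨w1, w2, w3⟩, hw⟩⟩ ⟨⟨e1', e2', e3'⟩, ⟨⟨w1', w2', w3'⟩, hw'⟩⟩ h
      have h' := congrArg (Subtype.val) h
      simp only [F, Prod.mk.injEq] at h'
      obtain ⟨ha, hb, hc⟩ := h'
      obtain ⟨hae, haw⟩ := g_inj ha
      obtain ⟨hbe, hbw⟩ := g_inj hb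
      obtain ⟨hce, hcw⟩ := g_inj hc
      simp_all
    · rintro ⟨⟨x, y, z⟩, hxyz⟩
      have hx : x^2 + y^2 + z^2 = ((4*n : ℤ) : ZMod (2^(s+2))) := hxyz
      obtain ⟨hex, hey, hez⟩ := even_of_sum_sq s n x y z hx
      set e1 : ZMod 2 := ((x.val / 2 / 2^s : ℕ) : ZMod 2)
      set e2 : ZMod 2 := ((y.val / 2 / 2^s : ℕ) : ZMod 2)
      set e3 : ZMod 2 := ((z.val / 2 / 2^s : ℕ) : ZMod 2)
      set w1 : ZMod (2^s) := ((x.val / 2 : ℕ) : ZMod (2^s))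
      set w2 : ZMod (2^s) := ((y.val / 2 : ℕ) : ZMod (2^s))
      set w3 : ZMod (2^s) := ((z.val / 2 : ℕ) : ZMod (2^s))
      have hg1 : g s e1 w1 = x := g_surj_aux s x hex
      have hg2 : g s e2 w2 = y := g_surj_aux s y hey
      have hg3 : g s e3 w3 = z := g_surj_aux s z hez
      have hwmem : w1^2 + w2^2 + w3^2 = ((n : ℤ) : ZMod (2^s)) := by
        apply (mem_iff s n w1 w2 w3).mpr
        rw [← g_sq s e1 w1, ← g_sq s e2 w2, ← g_sq s e3 w3, hg1, hg2, hg3]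
        exact hx
      refine ⟨⟨(e1, e2, e3), ⟨(w1, w2, w3), hwmem⟩⟩, ?_⟩
      apply Subtype.ext
      simp only [F]
      rw [hg1, hg2, hg3]
  have hcard := Nat.card_eq_of_bijective F hbij
  rw [← hcard, Nat.card_prod]
  have h8 : Nat.card (ZMod 2 × ZMod 2 × ZMod 2) = 8 := by
    simp [Nat.card_eq_fintype_card]
  rw [h8]

end DyadicSqAux

theorem dyadic_three_squares_scaling (t : ℕ) (ht : 2 ≤ t) (n : ℤ) :
    cntS t (4 * n) = 8 * cntS (t - 2) n := by
  obtain ⟨s, rfl⟩ : ∃ s, t = s + 2 := ⟨t - 2, by omega⟩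
  have hts : s + 2 - 2 = s := by omega
  rw [hts]
  unfold cntS
  exact DyadicSqAux.card_eq s n
end

section
/- Let a, b, c, d, e, f be integers with a and d odd and e and f even. Then for every triple (x,y,z) ∈ ℤ³, the following four conditions hold simultaneously — a·x² + b·y² + c·z² + d·yz + e·zx + f·xy ≡ 0 (mod 4), 2a·x + f·y + e·z ≡ 0 (mod 4), f·x + 2b·y + d·z ≡ 0 (mod 4), and e·x + d·y + 2c·z ≡ 0 (mod 4) — if and only if x ≡ 0 (mod 2), y ≡ 0 (mod 4), and z ≡ 0 (mod 4). -/
theorem watson_lattice_characterization (a b c d e f : ℤ) (ha : Odd a)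
    (hd : Odd d) (he : Even e) (hf : Even f) (x y z : ℤ) :
    ((4 : ℤ) ∣ (a * x ^ 2 + b * y ^ 2 + c * z ^ 2 + d * y * z + e * z * x + f * x * y) ∧
     (4 : ℤ) ∣ (2 * a * x + f * y + e * z) ∧
     (4 : ℤ) ∣ (f * x + 2 * b * y + d * z) ∧
     (4 : ℤ) ∣ (e * x + d * y + 2 * c * z)) ↔
    ((2 : ℤ) ∣ x ∧ (4 : ℤ) ∣ y ∧ (4 : ℤ) ∣ z) := by
  obtain ⟨A, rfl⟩ := ha
  obtain ⟨D, rfl⟩ := hd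
  obtain ⟨E, rfl⟩ := he
  obtain ⟨F, rfl⟩ := hf
  constructor
  · rintro ⟨⟨m1, h1⟩, ⟨m2, h2⟩, ⟨m3, h3⟩, ⟨m4, h4⟩⟩
    -- z is even
    obtain ⟨Z, rfl⟩ : (2:ℤ) ∣ z := ⟨2*m3 - (F*x + b*y + D*z), by linarith⟩
    -- y is even
    obtain ⟨Y, rfl⟩ : (2:ℤ) ∣ y := ⟨2*m4 - (E*x + D*y + 2*c*Z), by linarith⟩
    -- x is even
    have hx2 : Even (x ^ 2) :=
      ⟨2*m1 - (A*x^2 + 2*b*Y^2 + 2*c*Z^2 + 4*D*Y*Z + 2*Y*Z + 2*E*Z*x + 2*F*x*Y),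
        by linear_combination h1⟩
    obtain ⟨X, rfl⟩ : (2:ℤ) ∣ x := (Int.even_pow.mp hx2).1.two_dvd
    refine ⟨⟨X, rfl⟩, ⟨m4 - (E*X + D*Y + c*Z), by linarith⟩,
      ⟨m3 - (F*X + b*Y + D*Z), by linarith⟩⟩
  · rintro ⟨⟨X, rfl⟩, ⟨Y, rfl⟩, ⟨Z, rfl⟩⟩
    refine ⟨⟨(2*A+1)*X^2 + 4*b*Y^2 + 4*c*Z^2 + 4*(2*D+1)*Y*Z + 4*E*Z*X + 4*F*X*Y,
        by ring⟩,
      ⟨(2*A+1)*X + 2*F*Y + 2*E*Z, by ring⟩,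
      ⟨F*X + 2*b*Y + (2*D+1)*Z, by ring⟩,
      ⟨E*X + (2*D+1)*Y + 2*c*Z, by ring⟩⟩
end
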